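/- Let p ≥ 2. If f ∈ L^p(X,μ) satisfies Ω(f,f) = 0 for every Ω ∈ S(L^p(X,μ)), then f = 0 (as an element of L^p). That is, the pair (L^p(X,μ), C(X)) is *-semisimple. -/

import Mathlib

open MeasureTheory ENNReal Complex
open scoped ComplexOrder

/-- The set `S(L^p)` of sesquilinear forms on `L^p(X,μ)`: `Ω` is linear in the
first variable, conjugate-linear in the second, positive (`Ω(f,f) ≥ 0`),
invariant (`Ω(f·φ, ψ) = Ω(φ, f̄·ψ)` for continuous `φ, ψ`), and bounded
(`|Ω(f,g)| ≤ ‖f‖_p ‖g‖_p`). -/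
def IsSform {X : Type*} [MeasurableSpace X] [TopologicalSpace X]
    (μ : Measure X) (p : ℝ≥0∞)
    (Ω : Lp ℂ p μ → Lp ℂ p μ → ℂ) : Prop :=
  (∀ f g h : Lp ℂ p μ, Ω (f + g) h = Ω f h + Ω g h) ∧
  (∀ (c : ℂ) (f g : Lp ℂ p μ), Ω (c • f) g = c * Ω f g) ∧
  (∀ f g h : Lp ℂ p μ, Ω f (g + h) = Ω f g + Ω f h) ∧
  (∀ (c : ℂ) (f g : Lp ℂ p μ), Ω f (c • g) = (starRingEnd ℂ) c * Ω f g) ∧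
  (∀ f : Lp ℂ p μ, 0 ≤ Ω f f) ∧
  (∀ (f : Lp ℂ p μ) (φ ψ : C(X, ℂ)) (φL ψL fφ fstarψ : Lp ℂ p μ),
      (φL : X → ℂ) =ᵐ[μ] φ → (ψL : X → ℂ) =ᵐ[μ] ψ →
      (fφ : X → ℂ) =ᵐ[μ] (fun x => f x * φ x) →
      (fstarψ : X → ℂ) =ᵐ[μ] (fun x => (starRingEnd ℂ) (f x) * ψ x) →
      Ω fφ ψL = Ω φL fstarψ) ∧
  (∀ f g : Lp ℂ p μ, ‖Ω f g‖ ≤ ‖f‖ * ‖g‖)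

/-- The set `B^p_+`: nonnegative functions in `L^{p/(p-2)}` of norm at most one
(in `ℝ≥0∞`-arithmetic `p/(p-2) = ∞` when `p = 2`). -/
def MemBp {X : Type*} [MeasurableSpace X] (μ : Measure X) (p : ℝ≥0∞)
    (ψ : X → ℝ) : Prop :=
  MemLp ψ (p / (p - 2)) μ ∧ (0 ≤ᵐ[μ] ψ) ∧ eLpNorm ψ (p / (p - 2)) μ ≤ 1


open scoped InnerProductSpace
theorem lp_star_semisimple
    {X : Type*} [MeasurableSpace X] [TopologicalSpace X] [CompactSpace X]
    [T2Space X] [BorelSpace X] (μ : Measure X) [IsFiniteMeasure μ]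
    (p : ℝ≥0∞) (hp : 2 ≤ p) (hp' : p ≠ ∞)
    (f : Lp ℂ p μ)
    (hf : ∀ Ω : Lp ℂ p μ → Lp ℂ p μ → ℂ, IsSform μ p Ω → Ω f f = 0) :
    f = 0 := by
  classical
  have hmem : ∀ g : Lp ℂ p μ, MemLp (g : X → ℂ) 2 μ :=
    fun g => (Lp.memLp g).mono_exponent hp
  set G : Lp ℂ p μ → Lp ℂ 2 μ := fun g => (hmem g).toLp _ with hGdef
  have hGae : ∀ g, (G g : X → ℂ) =ᵐ[μ] g := fun g => (hmem g).coeFn_toLp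
  have hGadd : ∀ g h, G (g + h) = G g + G h := by
    intro g h
    refine Lp.ext ?_
    filter_upwards [hGae (g + h), hGae g, hGae h, Lp.coeFn_add g h,
      Lp.coeFn_add (G g) (G h)] with x h1 h2 h3 h4 h5
    rw [h1, h5, h4]
    simp [h2, h3]
  have hGsmul : ∀ (a : ℂ) g, G (a • g) = a • G g := by
    intro a g
    refine Lp.ext ?_
    filter_upwards [hGae (a • g), hGae g, Lp.coeFn_smul a g,
      Lp.coeFn_smul a (G g)] with x h1 h2 h3 h4
    rw [h1, h4, h3]
    simp [h2]
  -- norm comparison constant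
  set κ₀ : ℝ≥0∞ := μ Set.univ ^ (1 / (2:ℝ≥0∞).toReal - 1 / p.toReal) with hκ₀
  have hexp : 0 ≤ 1 / (2:ℝ≥0∞).toReal - 1 / p.toReal := by
    have h2 : (2:ℝ) ≤ p.toReal := by
      rw [show (2:ℝ) = ((2:ℝ≥0∞)).toReal by norm_num]
      exact ENNReal.toReal_mono hp' hp
    have hpos : (0:ℝ) < p.toReal := by linarith
    have : 1 / p.toReal ≤ 1 / 2 := by
      apply one_div_le_one_div_of_le <;> linarith
    simp only [ENNReal.toReal_ofNat]
    linarith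
  have hκ₀fin : κ₀ ≠ ∞ := by
    rw [hκ₀]
    exact (ENNReal.rpow_lt_top_of_nonneg hexp (measure_ne_top μ _)).ne
  set κ : ℝ := κ₀.toReal with hκ
  have hκnn : 0 ≤ κ := ENNReal.toReal_nonneg
  have hGnorm : ∀ g : Lp ℂ p μ, ‖G g‖ ≤ ‖g‖ * κ := by
    intro g
    rw [Lp.norm_def, Lp.norm_def, hκ, ← ENNReal.toReal_mul]
    have h1 : eLpNorm (G g : X → ℂ) 2 μ = eLpNorm (g : X → ℂ) 2 μ :=
      eLpNorm_congr_ae (hGae g)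
    rw [h1]
    refine ENNReal.toReal_mono ?_ ?_
    · exact ENNReal.mul_ne_top (Lp.eLpNorm_ne_top g) hκ₀fin
    · exact eLpNorm_le_eLpNorm_mul_rpow_measure_univ hp (Lp.aestronglyMeasurable g)
  have hLpnn : ∀ g : Lp ℂ p μ, (0:ℝ) ≤ ‖g‖ := by
    intro g; rw [Lp.norm_def]; exact ENNReal.toReal_nonneg
  set c : ℝ := 1 / (κ ^ 2 + 1) with hc
  have hcpos : 0 < c := by positivity
  set Ω : Lp ℂ p μ → Lp ℂ p μ → ℂ := fun g h => (c : ℂ) * ⟪G h, G g⟫_ℂ with hΩ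
  have hS : IsSform μ p Ω := by
    refine ⟨?_, ?_, ?_, ?_, ?_, ?_, ?_⟩
    · intro g h k
      simp only [hΩ, hGadd, inner_add_right]
      ring
    · intro a g h
      simp only [hΩ, hGsmul, inner_smul_right]
      ring
    · intro g h k
      simp only [hΩ, hGadd, inner_add_left]
      ring
    · intro a g h
      simp only [hΩ, hGsmul, inner_smul_left]
      ring
    · intro g
      have hre : 0 ≤ RCLike.re ⟪G g, G g⟫_ℂ := inner_self_nonneg
      have him : RCLike.im ⟪G g, G g⟫_ℂ = 0 := inner_self_im _
      rw [RCLike.re_to_complex] at hre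
      rw [RCLike.im_to_complex] at him
      rw [hΩ, Complex.le_def]
      constructor
      · simpa [Complex.re_ofReal_mul] using mul_nonneg hcpos.le hre
      · simp only [Complex.im_ofReal_mul, him, mul_zero, Complex.zero_im]
    · intro g φ ψ φL ψL gφ gstarψ hφL hψL hgφ hgstarψ
      simp only [hΩ]
      congr 1
      rw [MeasureTheory.L2.inner_def, MeasureTheory.L2.inner_def]
      refine integral_congr_ae ?_
      filter_upwards [hGae ψL, hGae gφ, hGae φL, hGae gstarψ, hφL, hψL, hgφ,
        hgstarψ, Lp.aestronglyMeasurable g |>.ae_eq_mk] with x h1 h2 h3 h4 h5 h6 h7 h8 _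
      simp only [RCLike.inner_apply, h1, h2, h3, h4, h5, h6, h7, h8, map_mul,
        Complex.conj_conj]
      ring
    · intro g h
      rw [hΩ]
      have h1 : ‖(c:ℂ) * ⟪G h, G g⟫_ℂ‖ = c * ‖⟪G h, G g⟫_ℂ‖ := by
        rw [norm_mul, Complex.norm_real, Real.norm_of_nonneg hcpos.le]
      rw [h1]
      have h2 : ‖⟪G h, G g⟫_ℂ‖ ≤ ‖G h‖ * ‖G g‖ := norm_inner_le_norm _ _
      have h3 : ‖G h‖ * ‖G g‖ ≤ (‖h‖ * κ) * (‖g‖ * κ) :=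
        mul_le_mul (hGnorm h) (hGnorm g) (norm_nonneg _)
          (mul_nonneg (hLpnn h) hκnn)
      have h4 : c * (‖h‖ * κ * (‖g‖ * κ)) ≤ ‖g‖ * ‖h‖ := by
        rw [hc]
        rw [div_mul_eq_mul_div, one_mul, div_le_iff₀ (by positivity)]
        have hg : 0 ≤ ‖g‖ := hLpnn g
        have hh : 0 ≤ ‖h‖ := hLpnn h
        nlinarith [mul_nonneg hg hh, sq_nonneg κ]
      calc c * ‖⟪G h, G g⟫_ℂ‖ ≤ c * (‖h‖ * κ * (‖g‖ * κ)) := by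
            refine mul_le_mul_of_nonneg_left (h2.trans h3) hcpos.le
        _ ≤ ‖g‖ * ‖h‖ := h4
  have key := hf Ω hS
  have hzero : ⟪G f, G f⟫_ℂ = 0 := by
    have hcne : (c : ℂ) ≠ 0 := by
      simpa using hcpos.ne'
    simpa [hΩ, hcne] using key
  have hGf : G f = 0 := inner_self_eq_zero.mp hzero
  refine Lp.ext ?_
  have h0 : (G f : X → ℂ) =ᵐ[μ] 0 := by rw [hGf]; exact Lp.coeFn_zero _ _ _
  filter_upwards [hGae f, h0, Lp.coeFn_zero ℂ p μ] with x h1 h2 h3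
  rw [h3, ← h1, h2]
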